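/- For every odd prime p, every subgroup of the Heisenberg group H_p is one of the following: the trivial subgroup, the subgroup ζ(H_p), one of the p²+p subgroups A_{i,j} with i ∈ (ZMod p) ∪ {∞} and j ∈ ZMod p, one of the p+1 subgroups N_i with i ∈ (ZMod p) ∪ {∞}, or H_p itself. -/

import Mathlib

@[ext]
structure Heis (p : ℕ) where
  x : ZMod p
  y : ZMod p
  z : ZMod p

namespace Heis

variable {p : ℕ}

instance : Mul (Heis p) := ⟨fun a b => ⟨a.x + b.x, a.y + b.y, a.z + b.z + a.x * b.y⟩⟩
instance : One (Heis p) := ⟨⟨0, 0, 0⟩⟩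
instance : Inv (Heis p) := ⟨fun a => ⟨-a.x, -a.y, a.x * a.y - a.z⟩⟩

lemma mul_def (a b : Heis p) :
    a * b = ⟨a.x + b.x, a.y + b.y, a.z + b.z + a.x * b.y⟩ := rfl
lemma one_def : (1 : Heis p) = ⟨0, 0, 0⟩ := rfl
lemma inv_def (a : Heis p) : a⁻¹ = ⟨-a.x, -a.y, a.x * a.y - a.z⟩ := rfl

instance instGroup : Group (Heis p) where
  mul_assoc a b c := by ext <;> simp [mul_def] <;> ring
  one_mul a := by ext <;> simp [mul_def, one_def]
  mul_one a := by ext <;> simp [mul_def, one_def]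
  inv_mul_cancel a := by ext <;> simp [mul_def, inv_def, one_def]

end Heis

/-- The centre subgroup ζ(H_p) = {(0,0,z)}. -/
def Zeta (p : ℕ) : Subgroup (Heis p) where
  carrier := {g | g.x = 0 ∧ g.y = 0}
  one_mem' := ⟨rfl, rfl⟩
  mul_mem' := by
    rintro a b ⟨ha1, ha2⟩ ⟨hb1, hb2⟩
    exact ⟨by simp [Heis.mul_def, ha1, hb1], by simp [Heis.mul_def, ha2, hb2]⟩
  inv_mem' := by
    rintro a ⟨h1, h2⟩
    exact ⟨by simp [Heis.inv_def, h1], by simp [Heis.inv_def, h2]⟩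

/-- The subgroups N_i of order p²; `some i` is N_i for i ∈ ZMod p, `none` is N_∞. -/
def N (p : ℕ) : Option (ZMod p) → Subgroup (Heis p)
  | some i =>
    { carrier := {g | g.y = g.x * i}
      one_mem' := by simp [Heis.one_def]
      mul_mem' := by
        intro a b ha hb
        simp only [Set.mem_setOf_eq, Heis.mul_def] at *
        rw [ha, hb]; ring
      inv_mem' := by
        intro a ha
        simp only [Set.mem_setOf_eq, Heis.inv_def] at *
        rw [ha]; ring }
  | none =>
    { carrier := {g | g.x = 0}
      one_mem' := by simp [Heis.one_def]
      mul_mem' := by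
        intro a b ha hb
        simp only [Set.mem_setOf_eq, Heis.mul_def] at *
        rw [ha, hb]; ring
      inv_mem' := by
        intro a ha
        simp only [Set.mem_setOf_eq, Heis.inv_def] at *
        rw [ha]; ring }

/-- The cyclic subgroups A_{i,j} of order p; `A p (some i) j = ⟨(1,i,j)⟩`,
`A p none j = ⟨(0,1,j)⟩`. -/
def A (p : ℕ) : Option (ZMod p) → ZMod p → Subgroup (Heis p)
  | some i, j => Subgroup.zpowers (⟨1, i, j⟩ : Heis p)
  | none, j => Subgroup.zpowers (⟨0, 1, j⟩ : Heis p)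


namespace Heis

variable {p : ℕ}

lemma pow_def (g : Heis p) (n : ℕ) :
    g ^ n = ⟨(n : ZMod p) * g.x, (n : ZMod p) * g.y,
      (n : ZMod p) * g.z + ((n.choose 2 : ℕ) : ZMod p) * (g.x * g.y)⟩ := by
  induction n with
  | zero => ext <;> simp [one_def]
  | succ n ih =>
      rw [pow_succ, ih]
      ext <;> simp [mul_def, Nat.choose_succ_succ, Nat.choose_one_right] <;> push_cast <;> ring

lemma comm_mem {K : Subgroup (Heis p)} {a b : Heis p} (ha : a ∈ K) (hb : b ∈ K) :
    (⟨0, 0, a.x * b.y - b.x * a.y⟩ : Heis p) ∈ K := by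
  have h : (⟨0, 0, a.x * b.y - b.x * a.y⟩ : Heis p) = a * b * a⁻¹ * b⁻¹ := by
    ext <;> simp [mul_def, inv_def] <;> ring
  rw [h]
  exact K.mul_mem (K.mul_mem (K.mul_mem ha hb) (K.inv_mem ha)) (K.inv_mem hb)

lemma central_mem [Fact p.Prime] {K : Subgroup (Heis p)} {c : Heis p} (hc : c ∈ K)
    (hx : c.x = 0) (hy : c.y = 0) (hz : c.z ≠ 0) :
    ∀ w : ZMod p, (⟨0, 0, w⟩ : Heis p) ∈ K := by
  intro w
  obtain ⟨n, hn⟩ := ZMod.natCast_zmod_surjective (w * c.z⁻¹)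
  have key : ((n : ZMod p)) * c.z = w := by
    rw [hn]; field_simp
  have : (⟨0, 0, w⟩ : Heis p) = c ^ n := by
    ext <;> simp [pow_def, hx, hy, key]
  rw [this]; exact K.pow_mem hc n

lemma mem_of_eq_xy {K : Subgroup (Heis p)} (hcent : ∀ w : ZMod p, (⟨0, 0, w⟩ : Heis p) ∈ K)
    {h : Heis p} (hh : h ∈ K) (g : Heis p) (hx : g.x = h.x) (hy : g.y = h.y) : g ∈ K := by
  have : g = (⟨0, 0, g.z - h.z⟩ : Heis p) * h := by
    ext <;> simp [mul_def, hx, hy]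
  rw [this]; exact K.mul_mem (hcent _) hh

lemma eq_pow_of_central_trivial {K : Subgroup (Heis p)}
    (hC : ∀ c ∈ K, c.x = 0 → c.y = 0 → c.z = 0) {h u : Heis p} (hh : h ∈ K) (hu : u ∈ K)
    (m : ℕ) (hx : h.x = (m : ZMod p) * u.x) (hy : h.y = (m : ZMod p) * u.y) : h = u ^ m := by
  set d := h * (u ^ m)⁻¹ with hd
  have hdK : d ∈ K := K.mul_mem hh (K.inv_mem (K.pow_mem hu m))
  have hdx : d.x = 0 := by simp [hd, mul_def, inv_def, pow_def, hx]
  have hdy : d.y = 0 := by simp [hd, mul_def, inv_def, pow_def, hy]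
  have hdz := hC d hdK hdx hdy
  have hone : d = 1 := by
    ext
    · simpa [one_def] using hdx
    · simpa [one_def] using hdy
    · simpa [one_def] using hdz
  exact mul_inv_eq_one.mp hone

end Heis

section MemLemmas

variable {p : ℕ}

lemma mem_Zeta {g : Heis p} : g ∈ Zeta p ↔ g.x = 0 ∧ g.y = 0 := Iff.rfl
lemma mem_N_some {i : ZMod p} {g : Heis p} : g ∈ N p (some i) ↔ g.y = g.x * i := Iff.rfl
lemma mem_N_none {g : Heis p} : g ∈ N p none ↔ g.x = 0 := Iff.rfl
lemma A_some (i j : ZMod p) : A p (some i) j = Subgroup.zpowers (⟨1, i, j⟩ : Heis p) := rfl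
lemma A_none (j : ZMod p) : A p none j = Subgroup.zpowers (⟨0, 1, j⟩ : Heis p) := rfl

end MemLemmas

/-- For every odd prime `p`, every subgroup of the Heisenberg group `H_p`
is one of: the trivial subgroup, the centre `ζ(H_p)`, one of the `p²+p` subgroups `A_{i,j}`
(`i ∈ ZMod p ∪ {∞}`, `j ∈ ZMod p`), one of the `p+1` subgroups `N_i`
(`i ∈ ZMod p ∪ {∞}`), or `H_p` itself. -/
theorem heisenberg_subgroup_classification (p : ℕ) (hp : p.Prime) (ho : Odd p)
    (K : Subgroup (Heis p)) :
    K = ⊥ ∨ K = Zeta p ∨ (∃ (i : Option (ZMod p)) (j : ZMod p), K = A p i j) ∨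
      (∃ i : Option (ZMod p), K = N p i) ∨ K = ⊤ := by
  haveI := Fact.mk hp
  haveI : NeZero p := ⟨hp.ne_zero⟩
  by_cases hZ : ∀ g ∈ K, g.x = 0 ∧ g.y = 0
  · by_cases h0 : ∀ g ∈ K, g.z = 0
    · left
      ext g
      simp only [Subgroup.mem_bot]
      constructor
      · intro hg
        obtain ⟨h1, h2⟩ := hZ g hg
        ext <;> simp [Heis.one_def, h1, h2, h0 g hg]
      · rintro rfl; exact K.one_mem
    · right; left
      push_neg at h0
      obtain ⟨c, hcK, hcz⟩ := h0
      obtain ⟨hcx, hcy⟩ := hZ c hcK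
      have hcent := Heis.central_mem hcK hcx hcy hcz
      apply le_antisymm
      · intro g hg; exact mem_Zeta.mpr (hZ g hg)
      · intro g hg
        obtain ⟨h1, h2⟩ := mem_Zeta.mp hg
        have := hcent g.z
        have hgeq : g = (⟨0, 0, g.z⟩ : Heis p) := by ext <;> simp [h1, h2]
        rw [hgeq]; exact this
  · push_neg at hZ
    obtain ⟨g0, hg0K, hg0⟩ := hZ
    by_cases hC : ∀ c ∈ K, c.x = 0 → c.y = 0 → c.z = 0
    · -- K is one of the A's
      right; right; left
      by_cases hx : ∃ a ∈ K, a.x ≠ 0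
      · obtain ⟨a, haK, hax⟩ := hx
        obtain ⟨n, hn⟩ := ZMod.natCast_zmod_surjective (a.x⁻¹ : ZMod p)
        set u := a ^ n with hu
        have huK : u ∈ K := K.pow_mem haK n
        have hux : u.x = 1 := by
          rw [hu, Heis.pow_def]; simp only [hn]; exact inv_mul_cancel₀ hax
        refine ⟨some u.y, u.z, ?_⟩
        have hueq : (⟨1, u.y, u.z⟩ : Heis p) = u := by ext <;> simp [hux]
        rw [A_some, hueq]
        apply le_antisymm
        · intro h hh
          have hdet := hC _ (Heis.comm_mem hh huK) rfl rfl
          have hhy : h.y = h.x * u.y := by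
            have : h.x * u.y - u.x * h.y = 0 := hdet
            rw [hux, one_mul] at this
            linear_combination -this
          obtain ⟨m, hm⟩ := ZMod.natCast_zmod_surjective h.x
          have heq : h = u ^ m :=
            Heis.eq_pow_of_central_trivial hC hh huK m
              (by rw [hm, hux, mul_one]) (by rw [hm, hhy])
          rw [heq]
          exact Subgroup.pow_mem _ (Subgroup.mem_zpowers u) m
        · rw [Subgroup.zpowers_le]; exact huK
      · push_neg at hx
        have hg0x : g0.x = 0 := hx g0 hg0K
        have hg0y : g0.y ≠ 0 := hg0 hg0x
        obtain ⟨n, hn⟩ := ZMod.natCast_zmod_surjective (g0.y⁻¹ : ZMod p)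
        set u := g0 ^ n with hu
        have huK : u ∈ K := K.pow_mem hg0K n
        have hux : u.x = 0 := by rw [hu, Heis.pow_def]; simp [hg0x]
        have huy : u.y = 1 := by
          rw [hu, Heis.pow_def]; simp only [hn]; exact inv_mul_cancel₀ hg0y
        refine ⟨none, u.z, ?_⟩
        have hueq : (⟨0, 1, u.z⟩ : Heis p) = u := by ext <;> simp [hux, huy]
        rw [A_none, hueq]
        apply le_antisymm
        · intro h hh
          obtain ⟨m, hm⟩ := ZMod.natCast_zmod_surjective h.y
          have heq : h = u ^ m :=
            Heis.eq_pow_of_central_trivial hC hh huK m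
              (by rw [hux, mul_zero]; exact hx h hh) (by rw [hm, huy, mul_one])
          rw [heq]
          exact Subgroup.pow_mem _ (Subgroup.mem_zpowers u) m
        · rw [Subgroup.zpowers_le]; exact huK
    · -- K contains the whole centre
      push_neg at hC
      obtain ⟨c, hcK, hcx, hcy, hcz⟩ := hC
      have hcent := Heis.central_mem hcK hcx hcy hcz
      by_cases hx : ∃ a ∈ K, a.x ≠ 0
      · obtain ⟨a, haK, hax⟩ := hx
        obtain ⟨n, hn⟩ := ZMod.natCast_zmod_surjective (a.x⁻¹ : ZMod p)
        set u := a ^ n with hu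
        have huK : u ∈ K := K.pow_mem haK n
        have hux : u.x = 1 := by
          rw [hu, Heis.pow_def]; simp only [hn]; exact inv_mul_cancel₀ hax
        by_cases hb : ∃ b ∈ K, b.y ≠ b.x * u.y
        · -- K = ⊤
          right; right; right; right
          obtain ⟨b, hbK, hbne⟩ := hb
          have hd : b.y - b.x * u.y ≠ 0 := fun h => hbne (by linear_combination h)
          rw [eq_top_iff]
          intro g _
          set kk : ZMod p := (g.y - g.x * u.y) / (b.y - b.x * u.y) with hkk
          set mm : ZMod p := g.x - kk * b.x with hmm
          obtain ⟨mn, hmn⟩ := ZMod.natCast_zmod_surjective mm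
          obtain ⟨kn, hkn⟩ := ZMod.natCast_zmod_surjective kk
          set h := u ^ mn * b ^ kn with hh
          have hhK : h ∈ K := K.mul_mem (K.pow_mem huK mn) (K.pow_mem hbK kn)
          have hhx : h.x = g.x := by
            rw [hh]
            simp only [Heis.mul_def, Heis.pow_def, hmn, hkn, hux]
            rw [hmm]; ring
          have hhy : h.y = g.y := by
            rw [hh]
            simp only [Heis.mul_def, Heis.pow_def, hmn, hkn]
            rw [hmm, hkk]
            linear_combination div_mul_cancel₀ (g.y - g.x * u.y) hd
          exact Heis.mem_of_eq_xy hcent hhK g hhx.symm hhy.symm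
        · -- K = N (some u.y)
          right; right; right; left
          push_neg at hb
          refine ⟨some u.y, ?_⟩
          apply le_antisymm
          · intro h hh; exact mem_N_some.mpr (hb h hh)
          · intro g hg
            have hgy : g.y = g.x * u.y := mem_N_some.mp hg
            obtain ⟨m, hm⟩ := ZMod.natCast_zmod_surjective g.x
            have hmK : u ^ m ∈ K := K.pow_mem huK m
            have hhx : g.x = (u ^ m).x := by rw [Heis.pow_def]; simp [hm, hux]
            have hhy : g.y = (u ^ m).y := by
              rw [Heis.pow_def]; simp only [hm]; rw [hgy]
            exact Heis.mem_of_eq_xy hcent hmK g hhx hhy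
      · -- K = N none
        push_neg at hx
        right; right; right; left
        refine ⟨none, ?_⟩
        have hg0x : g0.x = 0 := hx g0 hg0K
        have hg0y : g0.y ≠ 0 := hg0 hg0x
        apply le_antisymm
        · intro h hh; exact mem_N_none.mpr (hx h hh)
        · intro g hg
          have hgx : g.x = 0 := mem_N_none.mp hg
          obtain ⟨m, hm⟩ := ZMod.natCast_zmod_surjective (g.y * g0.y⁻¹)
          have hmK : g0 ^ m ∈ K := K.pow_mem hg0K m
          have hhx : g.x = (g0 ^ m).x := by rw [Heis.pow_def]; simp [hg0x, hgx]
          have hhy : g.y = (g0 ^ m).y := by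
            rw [Heis.pow_def]; simp only [hm]; field_simp
          exact Heis.mem_of_eq_xy hcent hmK g hhx hhy
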